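/- For any PICOD hypergraph H, the optimal length of a k-vector linear pliable index code is at most the k-fold conflict-free chromatic number: ℓ*_k(H) ≤ χ_{k,CF}(H). -/

import Mathlib

section Aux
variable {F : Type*} [Field F] {L : ℕ}

/-- Functions supported on `S`. -/
def suppSub (F : Type*) [Field F] {L : ℕ} (S : Finset (Fin L)) :
    Submodule F (Fin L → F) where
  carrier := {x | ∀ a ∉ S, x a = 0}
  add_mem' := by intro x y hx hy a ha; simp [hx a ha, hy a ha]
  zero_mem' := by intro a ha; rfl
  smul_mem' := by intro c x hx a ha; simp [hx a ha]

lemma mem_suppSub {S : Finset (Fin L)} {x : Fin L → F} :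
    x ∈ suppSub F S ↔ ∀ a ∉ S, x a = 0 := Iff.rfl

lemma suppSub_inf_eq_bot {S T : Finset (Fin L)} (h : Disjoint S T) :
    suppSub F S ⊓ suppSub F T = ⊥ := by
  rw [eq_bot_iff]
  rintro x ⟨hS, hT⟩
  simp only [Submodule.mem_bot]
  funext a
  by_cases ha : a ∈ S
  · exact hT a (Finset.disjoint_left.mp h ha)
  · exact hS a ha

end Aux

/-- `C` is a `k`-fold conflict-free coloring of the hypergraph with edge set `E`. -/
def IsKFoldCF {V α : Type*} [DecidableEq α] (E : Finset (Finset V)) (k : ℕ)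
    (C : V → Finset α) : Prop :=
  (∀ v, (C v).card = k) ∧
    ∀ e ∈ E, ∃ v ∈ e, ∀ u ∈ e, u ≠ v → Disjoint (C v) (C u)

/-- The `k`-fold conflict-free chromatic number. -/
noncomputable def chiCF {V : Type*} (E : Finset (Finset V)) (k : ℕ) : ℕ :=
  sInf {L | ∃ C : V → Finset (Fin L), IsKFoldCF E k C}

/-- Property (P): the matrix `G` satisfies the receiver with request-set `I`. -/
def SatisfiesReceiver {F ι : Type*} [Field F] {m k : ℕ}
    (G : Fin m → Fin k → ι → F) (I : Finset (Fin m)) : Prop :=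
  ∃ d ∈ I,
    Module.finrank F (Submodule.span F (Set.range (G d))) = k ∧
    Submodule.span F (Set.range (G d)) ⊓
      Submodule.span F {x | ∃ i ∈ I, i ≠ d ∧ ∃ j : Fin k, x = G i j} = ⊥

/-- The optimal length of a `k`-vector linear pliable index code over `F`. -/
noncomputable def optLen (F : Type*) [Field F] (m k : ℕ)
    (𝔍 : Finset (Finset (Fin m))) : ℕ :=
  sInf {L | ∃ G : Fin m → Fin k → Fin L → F, ∀ e ∈ 𝔍, SatisfiesReceiver G e}

/-- The optimal `k`-vector linear PIC length is at most the `k`-fold conflict-free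
chromatic number: `ℓ*_k(H) ≤ χ_{k,CF}(H)`. -/
theorem stmt_4 {F : Type*} [Field F] (m k : ℕ) (𝔍 : Finset (Finset (Fin m)))
    (h : {L | ∃ C : Fin m → Finset (Fin L), IsKFoldCF 𝔍 k C}.Nonempty) :
    optLen F m k 𝔍 ≤ chiCF 𝔍 k := by
  have hmem : chiCF 𝔍 k ∈ {L | ∃ C : Fin m → Finset (Fin L), IsKFoldCF 𝔍 k C} := Nat.sInf_mem h
  set L := chiCF 𝔍 k with hLdef
  obtain ⟨C, hcard, hcf⟩ := hmem
  apply Nat.sInf_le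
  -- construct G from the coloring
  refine ⟨fun i j => Pi.single (((C i).orderIsoOfFin (hcard i)) j).1 (1 : F), ?_⟩
  intro e he
  obtain ⟨d, hd, hdis⟩ := hcf e he
  set σ : Fin m → Fin k → Fin L := fun i j => (((C i).orderIsoOfFin (hcard i)) j).1 with hσ
  have hσmem : ∀ i j, σ i j ∈ C i := fun i j => ((C i).orderIsoOfFin (hcard i) j).2
  have hσinj : ∀ i, Function.Injective (σ i) := by
    intro i a b hab
    exact ((C i).orderIsoOfFin (hcard i)).injective (Subtype.ext hab)
  refine ⟨d, hd, ?_, ?_⟩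
  · -- finrank = k
    have hli : LinearIndependent F fun j : Fin k => (Pi.single (σ d j) (1 : F) : Fin L → F) := by
      have := (Pi.basisFun F (Fin L)).linearIndependent.comp (σ d) (hσinj d)
      convert this using 1
      funext j
      simp [Function.comp, Pi.basisFun_apply, Pi.single]
    have := finrank_span_eq_card hli
    rw [Fintype.card_fin] at this
    exact this
  · -- intersection trivial
    set B : Finset (Fin L) := (e.erase d).biUnion C with hB
    have h1 : Submodule.span F (Set.range fun j : Fin k => Pi.single (σ d j) (1 : F))
        ≤ suppSub F (C d) := by
      rw [Submodule.span_le]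
      rintro x ⟨j, rfl⟩
      intro a ha
      exact Pi.single_eq_of_ne (fun hc => ha (by rw [hc]; exact hσmem d j)) 1
    have h2 : Submodule.span F {x : Fin L → F | ∃ i ∈ e, i ≠ d ∧ ∃ j : Fin k,
        x = Pi.single (σ i j) (1 : F)} ≤ suppSub F B := by
      rw [Submodule.span_le]
      rintro x ⟨i, hi, hne, j, rfl⟩
      intro a ha
      refine Pi.single_eq_of_ne (fun hc => ha ?_) 1
      rw [hc]
      rw [hB]
      exact Finset.mem_biUnion.mpr ⟨i, Finset.mem_erase.mpr ⟨hne, hi⟩, hc ▸ hσmem i j⟩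
    have hdisj : Disjoint (C d) B := by
      rw [hB, Finset.disjoint_biUnion_right]
      intro i hi
      rw [Finset.mem_erase] at hi
      exact hdis i hi.2 hi.1
    have := inf_le_inf h1 h2
    rw [suppSub_inf_eq_bot hdisj] at this
    exact le_bot_iff.mp this
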